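/- (Theorem 1, part II.) For all integers j, N with j ≥ N ≥ 3t̄+1, the sequence ω satisfies the bound ω(j) ≤ α^{j−N}·ω(N) + (j−N)·(1+β·t̄)·φ(0)·γ^{j−1−3t̄}, where γ = (1−λ_e)^{1/(2(t̄+1))}. -/
import Mathlib

open Filter

/-- Theorem 1, part II: exponential bound on `ω`. -/
theorem omega_exponential_bound
    (lam lam_e : ℝ) (hlam0 : 0 < lam) (hlam1 : lam < 1)
    (hle0 : 0 < lam_e) (hle1 : lam_e < 1)
    (tbar : ℕ)
    (φ : ℕ → ℝ)
    (hφ0 : φ 0 = lam * lam_e / (lam * (tbar : ℝ) + 1))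
    (hφ1 : ∀ j, j < tbar → φ (j + 1) = (1 - lam) * (1 - lam_e) * φ j)
    (hφ2 : ∀ j, tbar ≤ j → φ (j + 1) =
      (1 - lam) * (1 - lam_e) * φ j + lam * (1 - lam_e) * φ (j - tbar))
    (ω : ℕ → ℝ)
    (hω0 : ω 0 = lam_e / (lam * (tbar : ℝ) + 1))
    (hω1 : ∀ j, 1 ≤ j → j ≤ tbar →
      ω j = (1 - lam) * (1 - lam_e) * ω (j - 1) + φ 0)
    (hω2 : ∀ j, tbar + 1 ≤ j →
      ω j = (1 - lam) * (1 - lam_e) * ω (j - 1) + φ 0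
        - lam_e * ∑ l ∈ Finset.range (j - tbar), φ l) :
    ∀ N j : ℕ, 3 * tbar + 1 ≤ N → N ≤ j →
      ω j ≤ ((1 - lam) * (1 - lam_e)) ^ (j - N) * ω N
        + ((j - N : ℕ) : ℝ) * (1 + lam * (1 - lam_e) * (tbar : ℝ)) * φ 0
          * ((1 - lam_e) ^ ((1 : ℝ) / (2 * ((tbar : ℝ) + 1)))) ^ (j - 1 - 3 * tbar) := by
  set α := (1 - lam) * (1 - lam_e) with hα
  set β := lam * (1 - lam_e) with hβ
  set g : ℝ := (1 - lam_e) ^ ((1 : ℝ) / (2 * ((tbar : ℝ) + 1))) with hg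
  have hle1' : (0:ℝ) < 1 - lam_e := by linarith
  have hg0 : 0 < g := Real.rpow_pos_of_pos hle1' _
  have hg1 : g ≤ 1 := Real.rpow_le_one hle1'.le (by linarith) (by positivity)
  have hgpow : g ^ (2 * (tbar + 1)) = 1 - lam_e := by
    rw [hg, ← Real.rpow_natCast ((1 - lam_e) ^ ((1 : ℝ) / (2 * ((tbar : ℝ) + 1)))) (2*(tbar+1)),
      ← Real.rpow_mul hle1'.le]
    have : (1 : ℝ) / (2 * ((tbar : ℝ) + 1)) * ((2*(tbar+1) : ℕ) : ℝ) = 1 := by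
      push_cast
      field_simp
    rw [this, Real.rpow_one]
  have hαβ : α + β = 1 - lam_e := by rw [hα, hβ]; ring
  have hα0 : 0 ≤ α := by rw [hα]; nlinarith
  have hβ0 : 0 ≤ β := by rw [hβ]; nlinarith
  have hα1 : α ≤ 1 - lam_e := by rw [hα]; nlinarith
  have hαg2 : α ≤ g ^ 2 := by
    calc α ≤ 1 - lam_e := hα1
    _ = g ^ (2 * (tbar + 1)) := hgpow.symm
    _ ≤ g ^ 2 := pow_le_pow_of_le_one hg0.le hg1 (by omega)
  have hαg1 : α ≤ g := by
    calc α ≤ 1 - lam_e := hα1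
    _ = g ^ (2 * (tbar + 1)) := hgpow.symm
    _ ≤ g ^ 1 := pow_le_pow_of_le_one hg0.le hg1 (by omega)
    _ = g := pow_one g
  have φ0pos : 0 < φ 0 := by
    rw [hφ0]
    have hden : (0:ℝ) < lam * (tbar : ℝ) + 1 := by positivity
    exact div_pos (by positivity) hden
  have hφnn : ∀ l, 0 ≤ φ l := by
    intro l
    induction l using Nat.strong_induction_on with
    | _ l ih =>
      match l with
      | 0 => exact φ0pos.le
      | (m+1) =>
        by_cases hm : m < tbar
        · rw [hφ1 m hm]
          exact mul_nonneg hα0 (ih m (by omega))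
        · rw [hφ2 m (by omega)]
          have h1 := ih m (by omega)
          have h2 := ih (m - tbar) (by omega)
          nlinarith
  have hφb : ∀ l, φ l ≤ φ 0 * g ^ (2 * l) := by
    intro l
    induction l using Nat.strong_induction_on with
    | _ l ih =>
      match l with
      | 0 => simp
      | (m+1) =>
        by_cases hm : m < tbar
        · rw [hφ1 m hm]
          have h1 := ih m (by omega)
          have e : φ 0 * g ^ (2*(m+1)) = g^2 * (φ 0 * g^(2*m)) := by ring
          rw [e]
          calc α * φ m ≤ α * (φ 0 * g^(2*m)) :=
                mul_le_mul_of_nonneg_left h1 hα0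
          _ ≤ g^2 * (φ 0 * g^(2*m)) := by
                apply mul_le_mul_of_nonneg_right hαg2
                positivity
        · rw [hφ2 m (by omega)]
          have h1 := ih m (by omega)
          have h2 := ih (m - tbar) (by omega)
          have key : α * g^(2*m) + β * g^(2*(m-tbar)) ≤ g^(2*(m+1)) := by
            have e1 : g^(2*m) = g^(2*tbar) * g^(2*(m-tbar)) := by
              rw [← pow_add]; congr 1; omega
            have e2 : g^(2*(m+1)) = g^(2*(tbar+1)) * g^(2*(m-tbar)) := by
              rw [← pow_add]; congr 1; omega
            rw [e1, e2, hgpow]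
            have h3 : g^(2*tbar) ≤ 1 := pow_le_one₀ hg0.le hg1
            have h4 : (0:ℝ) ≤ g^(2*(m-tbar)) := by positivity
            nlinarith [mul_nonneg hα0 h4]
          have h5 := mul_le_mul_of_nonneg_left h1 hα0
          have h6 := mul_le_mul_of_nonneg_left h2 hβ0
          have h7 := mul_le_mul_of_nonneg_left key φ0pos.le
          nlinarith
  have hkeyid : ∀ M : ℕ, φ 0 - lam_e * ∑ l ∈ Finset.range M, φ l
      = φ M + β * ((∑ l ∈ Finset.range M, φ l) - ∑ l ∈ Finset.range (M - tbar), φ l) := by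
    intro M
    induction M with
    | zero => simp
    | succ M ih =>
      rw [Finset.sum_range_succ]
      by_cases hM : tbar ≤ M
      · have h1 : M + 1 - tbar = (M - tbar) + 1 := by omega
        rw [h1, Finset.sum_range_succ, hφ2 M hM]
        linear_combination ih + φ M * hαβ
      · have h1 : M + 1 - tbar = 0 := by omega
        have h2 : M - tbar = 0 := by omega
        rw [h2] at ih
        rw [h1, hφ1 M (by omega)]
        linear_combination ih + φ M * hαβ
  have hX : (0:ℝ) ≤ (1 + β * (tbar:ℝ)) * φ 0 := by
    apply mul_nonneg _ φ0pos.le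
    have : (0:ℝ) ≤ β * (tbar:ℝ) := mul_nonneg hβ0 (Nat.cast_nonneg _)
    linarith
  intro N j hN hNj
  induction j, hNj using Nat.le_induction with
  | base => simp
  | succ j hNj ih =>
    have hω := hω2 (j+1) (by omega)
    simp only [Nat.add_sub_cancel] at hω
    set M := j + 1 - tbar with hMdef
    have hMt : tbar ≤ M := by omega
    have hid := hkeyid M
    have htail : (∑ l ∈ Finset.range M, φ l) - ∑ l ∈ Finset.range (M - tbar), φ l
        ≤ (tbar:ℝ) * (φ 0 * g ^ (2*(M - tbar))) := by
      rw [← Finset.sum_Ico_eq_sub _ (by omega : M - tbar ≤ M)]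
      have hb : ∀ l ∈ Finset.Ico (M - tbar) M, φ l ≤ φ 0 * g ^ (2*(M - tbar)) := by
        intro l hl
        rw [Finset.mem_Ico] at hl
        calc φ l ≤ φ 0 * g^(2*l) := hφb l
        _ ≤ φ 0 * g^(2*(M - tbar)) := by
            apply mul_le_mul_of_nonneg_left _ φ0pos.le
            exact pow_le_pow_of_le_one hg0.le hg1 (by omega)
      calc ∑ l ∈ Finset.Ico (M - tbar) M, φ l
          ≤ (Finset.Ico (M - tbar) M).card • (φ 0 * g ^ (2*(M - tbar))) :=
            Finset.sum_le_card_nsmul _ _ _ hb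
      _ = (tbar:ℝ) * (φ 0 * g ^ (2*(M - tbar))) := by
          rw [Nat.card_Ico, nsmul_eq_mul]
          congr 2
          omega
    have hc : φ 0 - lam_e * ∑ l ∈ Finset.range M, φ l
        ≤ (1 + β * (tbar:ℝ)) * φ 0 * g ^ (j - 3*tbar) := by
      rw [hid]
      have h1 : φ M ≤ φ 0 * g^(2*(M - tbar)) :=
        le_trans (hφb M)
          (mul_le_mul_of_nonneg_left (pow_le_pow_of_le_one hg0.le hg1 (by omega)) φ0pos.le)
      have h2 := mul_le_mul_of_nonneg_left htail hβ0
      have h3 : g^(2*(M - tbar)) ≤ g^(j - 3*tbar) :=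
        pow_le_pow_of_le_one hg0.le hg1 (by omega)
      have h4 := mul_le_mul_of_nonneg_left h3 hX
      linarith
    have e1 : j + 1 - N = (j - N) + 1 := by omega
    have e2 : j + 1 - 1 - 3*tbar = j - 3*tbar := by omega
    rw [hω, e1, e2, pow_succ]
    push_cast
    have hstep1 := mul_le_mul_of_nonneg_left ih hα0
    have hmX : (0:ℝ) ≤ ((j - N : ℕ):ℝ) * ((1 + β * (tbar:ℝ)) * φ 0) :=
      mul_nonneg (Nat.cast_nonneg _) hX
    have hαgg : α * g^(j - 1 - 3*tbar) ≤ g^(j - 3*tbar) := by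
      have e3 : g^(j - 3*tbar) = g * g^(j - 1 - 3*tbar) := by
        rw [← pow_succ']
        congr 1
        omega
      rw [e3]
      exact mul_le_mul_of_nonneg_right hαg1 (pow_nonneg hg0.le _)
    have h5 := mul_le_mul_of_nonneg_left hαgg hmX
    linarith
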